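/- Define c̃_1 = −b̃_{0,1}/b̃_{1,1}, c̃_{n+1} = b̃_{n−1,n}/b̃_{n,n} − b̃_{n,n+1}/b̃_{n+1,n+1} for n ≥ 1, and λ̃_{n+1} = (b̃_{n−1,n−1}/b̃_{n,n})² for n ≥ 1. Then c̃_1 = (p;q)_∞·q^{−3/2}/Δ_1; for n ≥ 1, c̃_{n+1} = [(1−q^{n+1})·(pq^n;q)_∞ − (1−pq^{n+1})·(q^n;q)_∞]·q^{−2n−3/2}/((1−q)·Δ_{n+1}) − [(1−q^n)·(pq^{n−1};q)_∞ − (1−pq^n)·(q^{n−1};q)_∞]·q^{−2n+1/2}/((1−q)·Δ_n); and for n ≥ 1, λ̃_{n+1} = (Δ_{n−1}·Δ_{n+1}/Δ_n²)·(1−q^n)·(1−pq^n)·q^{−4n}. -/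

import Mathlib

/-- Finite q-shifted factorial `(z;q)_n`. -/
noncomputable def qp (z q : ℝ) (n : ℕ) : ℝ := ∏ k ∈ Finset.range n, (1 - z * q ^ k)

/-- Infinite q-shifted factorial `(z;q)_∞`. -/
noncomputable def qpInf (z q : ℝ) : ℝ := ∏' k : ℕ, (1 - z * q ^ k)

/-- Gaussian q-binomial coefficient. -/
noncomputable def qbinom (q : ℝ) (n k : ℕ) : ℝ := qp q q n / (qp q q k * qp q q (n - k))

/-- `Δ_n = (pq^n;q)_∞ − (q^n;q)_∞`. -/
noncomputable def Δ (p q : ℝ) (n : ℕ) : ℝ := qpInf (p * q ^ n) q - qpInf (q ^ n) q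

/-- The normalizing constant `C̃_n`. -/
noncomputable def Ct (p q : ℝ) (n : ℕ) : ℝ :=
  (-1) ^ n * q ^ ((n : ℝ) / 2 + 1 / 4) * Real.sqrt (qp p q (n + 1) / qp q q n) *
    qpInf (p * q ^ (n + 1)) q / Real.sqrt (Δ p q n * Δ p q (n + 1))

/-- Coefficients `b̃_{k,n}` of the modified generalized Stieltjes–Wigert
orthonormal polynomials. -/
noncomputable def bt (p q : ℝ) (k n : ℕ) : ℝ :=
  Ct p q n * (-1) ^ k * qbinom q n k * (q ^ ((k : ℝ) ^ 2 + (k : ℝ) / 2) / qp p q k) *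
    (1 - (1 - q ^ k) / (1 - p * q ^ k) * (qpInf (q ^ (n + 1)) q / qpInf (p * q ^ (n + 1)) q))

open Real Filter

section aux
variable {z q : ℝ}

lemma factor_pos (hz0 : 0 ≤ z) (hz1 : z < 1) (hq0 : 0 < q) (hq1 : q < 1) (k : ℕ) :
    0 < 1 - z * q ^ k := by
  have h1 : z * q ^ k ≤ z * 1 := by
    apply mul_le_mul_of_nonneg_left _ hz0
    exact pow_le_one₀ hq0.le hq1.le
  nlinarith

lemma qp_pos (hz0 : 0 ≤ z) (hz1 : z < 1) (hq0 : 0 < q) (hq1 : q < 1) (n : ℕ) :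
    0 < qp z q n :=
  Finset.prod_pos fun k _ => factor_pos hz0 hz1 hq0 hq1 k

lemma summable_log_qp (hz0 : 0 ≤ z) (hz1 : z < 1) (hq0 : 0 < q) (hq1 : q < 1) :
    Summable fun k : ℕ => Real.log (1 - z * q ^ k) := by
  rw [← summable_neg_iff]
  apply Summable.of_nonneg_of_le (f := fun k : ℕ => (z / (1 - z)) * q ^ k)
  · intro k
    have h := factor_pos hz0 hz1 hq0 hq1 k
    have : Real.log (1 - z * q ^ k) ≤ 0 :=
      Real.log_nonpos (by positivity) (by nlinarith [pow_pos hq0 k])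
    linarith
  · intro k
    have h := factor_pos hz0 hz1 hq0 hq1 k
    have h2 : Real.log ((1 - z * q ^ k)⁻¹) ≤ (1 - z * q ^ k)⁻¹ - 1 :=
      Real.log_le_sub_one_of_pos (by positivity)
    rw [Real.log_inv] at h2
    have h3 : (1 - z * q ^ k)⁻¹ - 1 = z * q ^ k / (1 - z * q ^ k) := by
      field_simp
      ring
    have h4 : z * q ^ k / (1 - z * q ^ k) ≤ z * q ^ k / (1 - z) := by
      have hle : 1 - z ≤ 1 - z * q ^ k := by
        nlinarith [(pow_le_one₀ hq0.le hq1.le : q ^ k ≤ 1)]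
      gcongr
    calc -Real.log (1 - z * q ^ k) ≤ (1 - z * q ^ k)⁻¹ - 1 := h2
      _ = z * q ^ k / (1 - z * q ^ k) := h3
      _ ≤ z * q ^ k / (1 - z) := h4
      _ = (z / (1 - z)) * q ^ k := by ring
  · exact (summable_geometric_of_lt_one hq0.le hq1).mul_left _

lemma qpInf_hasProd (hz0 : 0 ≤ z) (hz1 : z < 1) (hq0 : 0 < q) (hq1 : q < 1) :
    HasProd (fun k : ℕ => 1 - z * q ^ k) (qpInf z q) :=
  (Real.multipliable_of_summable_log (f := fun k : ℕ => 1 - z * q ^ k)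
    (fun k => factor_pos hz0 hz1 hq0 hq1 k)
    (summable_log_qp hz0 hz1 hq0 hq1)).hasProd

lemma qpInf_multipliable (hz0 : 0 ≤ z) (hz1 : z < 1) (hq0 : 0 < q) (hq1 : q < 1) :
    Multipliable fun k : ℕ => 1 - z * q ^ k :=
  ⟨_, qpInf_hasProd hz0 hz1 hq0 hq1⟩

lemma qpInf_eq_exp (hz0 : 0 ≤ z) (hz1 : z < 1) (hq0 : 0 < q) (hq1 : q < 1) :
    qpInf z q = Real.exp (∑' k : ℕ, Real.log (1 - z * q ^ k)) := by
  have := Real.rexp_tsum_eq_tprod (f := fun k : ℕ => 1 - z * q ^ k)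
    (fun k => factor_pos hz0 hz1 hq0 hq1 k)
    (summable_log_qp hz0 hz1 hq0 hq1)
  rw [qpInf, ← this]

lemma qpInf_pos (hz0 : 0 ≤ z) (hz1 : z < 1) (hq0 : 0 < q) (hq1 : q < 1) :
    0 < qpInf z q := by
  rw [qpInf_eq_exp hz0 hz1 hq0 hq1]
  exact Real.exp_pos _

lemma qpInf_shift (hz0 : 0 ≤ z) (hz1 : z < 1) (hq0 : 0 < q) (hq1 : q < 1) :
    qpInf z q = (1 - z) * qpInf (z * q) q := by
  have hzq0 : 0 ≤ z * q := mul_nonneg hz0 hq0.le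
  have hzq1 : z * q < 1 := by nlinarith
  have hmul : Multipliable fun n : ℕ => 1 - z * q ^ (n + 1) := by
    have he : (fun n : ℕ => 1 - z * q ^ (n + 1)) = fun n : ℕ => 1 - (z * q) * q ^ n := by
      funext k; ring
    rw [he]
    exact qpInf_multipliable hzq0 hzq1 hq0 hq1
  have h := tprod_eq_zero_mul' (f := fun k : ℕ => 1 - z * q ^ k) hmul
  rw [qpInf, h]
  simp only [pow_zero, mul_one]
  congr 1
  rw [qpInf]
  apply tprod_congr
  intro k
  ring

lemma qpInf_mono {z₁ z₂ : ℝ} (h0 : 0 ≤ z₁) (h12 : z₁ ≤ z₂) (h2 : z₂ < 1)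
    (hq0 : 0 < q) (hq1 : q < 1) : qpInf z₂ q ≤ qpInf z₁ q := by
  have h1 : z₁ < 1 := lt_of_le_of_lt h12 h2
  rw [qpInf_eq_exp h0 h1 hq0 hq1, qpInf_eq_exp (h0.trans h12) h2 hq0 hq1]
  apply Real.exp_le_exp.mpr
  apply Summable.tsum_le_tsum _ (summable_log_qp (h0.trans h12) h2 hq0 hq1) (summable_log_qp h0 h1 hq0 hq1)
  intro k
  apply Real.log_le_log (factor_pos (h0.trans h12) h2 hq0 hq1 k)
  have := pow_pos hq0 k
  nlinarith
lemma qpInf_one (hq0 : 0 < q) (hq1 : q < 1) : qpInf (1 : ℝ) q = 0 := by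
  have h : HasProd (fun k : ℕ => 1 - (1:ℝ) * q ^ k) 0 := by
    have hev : ∀ᶠ s : Finset ℕ in atTop, ∏ i ∈ s, (1 - (1:ℝ) * q ^ i) = 0 := by
      filter_upwards [eventually_ge_atTop ({0} : Finset ℕ)] with s hs
      exact Finset.prod_eq_zero (hs (Finset.mem_singleton_self 0)) (by simp)
    exact Tendsto.congr' (by filter_upwards [hev] with s hs; exact hs.symm) tendsto_const_nhds
  exact h.tprod_eq
end aux

section main
variable {p q : ℝ} (hp0 : 0 ≤ p) (hp1 : p < 1) (hq0 : 0 < q) (hq1 : q < 1)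
include hp0 hp1 hq0 hq1

lemma pqn_mem (n : ℕ) : 0 ≤ p * q ^ n ∧ p * q ^ n < 1 := by
  have h1 : q ^ n ≤ 1 := pow_le_one₀ hq0.le hq1.le
  have h2 : 0 < q ^ n := pow_pos hq0 n
  constructor
  · positivity
  · nlinarith

lemma P_pos (n : ℕ) : 0 < qpInf (p * q ^ n) q :=
  qpInf_pos (pqn_mem hp0 hp1 hq0 hq1 n).1 (pqn_mem hp0 hp1 hq0 hq1 n).2 hq0 hq1

lemma G_pos (n : ℕ) (hn : 1 ≤ n) : 0 < qpInf ((q : ℝ) ^ n) q :=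
  qpInf_pos (by positivity) (pow_lt_one₀ hq0.le hq1 (by omega)) hq0 hq1

lemma G_zero : qpInf ((q : ℝ) ^ 0) q = 0 := by
  rw [pow_zero]; exact qpInf_one hq0 hq1

lemma P_shift (n : ℕ) : qpInf (p * q ^ n) q = (1 - p * q ^ n) * qpInf (p * q ^ (n + 1)) q := by
  have h := qpInf_shift (pqn_mem hp0 hp1 hq0 hq1 n).1 (pqn_mem hp0 hp1 hq0 hq1 n).2 hq0 hq1
  rw [h]; ring_nf

lemma G_shift (n : ℕ) : qpInf ((q : ℝ) ^ n) q = (1 - q ^ n) * qpInf ((q : ℝ) ^ (n + 1)) q := by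
  rcases Nat.eq_zero_or_pos n with rfl | hn
  · rw [G_zero hp0 hp1 hq0 hq1, pow_zero]; ring
  · have h := qpInf_shift (z := (q : ℝ) ^ n) (by positivity)
      (pow_lt_one₀ hq0.le hq1 (by omega)) hq0 hq1
    rw [h]; ring_nf

lemma PG_le (n : ℕ) (hn : 1 ≤ n) : qpInf ((q : ℝ) ^ n) q ≤ qpInf (p * q ^ n) q := by
  apply qpInf_mono (pqn_mem hp0 hp1 hq0 hq1 n).1 _
    (pow_lt_one₀ hq0.le hq1 (by omega)) hq0 hq1
  have h2 : 0 < q ^ n := pow_pos hq0 n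
  nlinarith

lemma Δ_pos (n : ℕ) : 0 < Δ p q n := by
  have hP := P_shift hp0 hp1 hq0 hq1 n
  have hG := G_shift hp0 hp1 hq0 hq1 n
  have hPG := PG_le hp0 hp1 hq0 hq1 (n + 1) (by omega)
  have hGpos := G_pos hp0 hp1 hq0 hq1 (n + 1) (by omega)
  have h1 : 0 < q ^ n := pow_pos hq0 n
  have h2 := (pqn_mem hp0 hp1 hq0 hq1 n).2
  have h3 : q ^ n ≤ 1 := pow_le_one₀ hq0.le hq1.le
  rw [Δ, hP, hG]
  nlinarith [mul_le_mul_of_nonneg_left hPG (by linarith : (0:ℝ) ≤ 1 - p * q ^ n),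
    mul_pos (mul_pos h1 (by linarith : (0:ℝ) < 1 - p)) hGpos]

lemma qp_p_pos (n : ℕ) : 0 < qp p q n := qp_pos hp0 hp1 hq0 hq1 n
lemma qp_q_pos (n : ℕ) : 0 < qp q q n := qp_pos hq0.le hq1 hq0 hq1 n

end main

lemma qp_succ (z q : ℝ) (n : ℕ) : qp z q (n + 1) = qp z q n * (1 - z * q ^ n) :=
  Finset.prod_range_succ _ _

section main2
variable {p q : ℝ} (hp0 : 0 ≤ p) (hp1 : p < 1) (hq0 : 0 < q) (hq1 : q < 1)
include hp0 hp1 hq0 hq1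

lemma one_sub_pq_pos (m : ℕ) : 0 < 1 - p * q ^ m := by
  have := (pqn_mem hp0 hp1 hq0 hq1 m).2; linarith

lemma Ct_ne (n : ℕ) : Ct p q n ≠ 0 := by
  rw [Ct]
  apply div_ne_zero
  · apply mul_ne_zero
    apply mul_ne_zero
    apply mul_ne_zero
    · exact pow_ne_zero _ (by norm_num)
    · exact (Real.rpow_pos_of_pos hq0 _).ne'
    · exact (Real.sqrt_pos.mpr (div_pos (qp_p_pos hp0 hp1 hq0 hq1 _)
        (qp_q_pos hp0 hp1 hq0 hq1 _))).ne'
    · exact (P_pos hp0 hp1 hq0 hq1 _).ne'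
  · exact (Real.sqrt_pos.mpr (mul_pos (Δ_pos hp0 hp1 hq0 hq1 _)
      (Δ_pos hp0 hp1 hq0 hq1 _))).ne'

lemma bt_diag (m : ℕ) :
    bt p q m m = Ct p q m * (-1) ^ m *
      (q ^ ((m : ℝ) ^ 2 + (m : ℝ) / 2) * Δ p q m /
        (qp p q (m + 1) * qpInf (p * q ^ (m + 1)) q)) := by
  have hqb : qbinom q m m = 1 := by
    rw [qbinom, Nat.sub_self]
    have h0 : qp q q 0 = 1 := by simp [qp]
    rw [h0, mul_one, div_self (qp_q_pos hp0 hp1 hq0 hq1 m).ne']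
  have hb1 := (one_sub_pq_pos hp0 hp1 hq0 hq1 m).ne'
  have hA := (P_pos hp0 hp1 hq0 hq1 (m + 1)).ne'
  have hT : 1 - (1 - q ^ m) / (1 - p * q ^ m) *
      (qpInf (q ^ (m + 1)) q / qpInf (p * q ^ (m + 1)) q)
      = Δ p q m / ((1 - p * q ^ m) * qpInf (p * q ^ (m + 1)) q) := by
    rw [Δ, P_shift hp0 hp1 hq0 hq1 m, G_shift hp0 hp1 hq0 hq1 m]
    field_simp
    linear_combination (-qpInf (p * q ^ (m + 1)) q) * mul_inv_cancel₀ hb1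
  rw [bt, hqb, hT, qp_succ p q m]
  have hF := (qp_p_pos hp0 hp1 hq0 hq1 m).ne'
  field_simp

lemma bt_offdiag (m : ℕ) :
    bt p q m (m + 1) = Ct p q (m + 1) * (-1) ^ m *
      ((1 - q ^ (m + 1)) * (q ^ ((m : ℝ) ^ 2 + (m : ℝ) / 2)) *
        ((1 - p * q ^ m) * qpInf (p * q ^ (m + 2)) q -
          (1 - q ^ m) * qpInf ((q : ℝ) ^ (m + 2)) q) /
        ((1 - q) * qp p q (m + 1) * qpInf (p * q ^ (m + 2)) q)) := by
  have hqb : qbinom q (m + 1) m = (1 - q ^ (m + 1)) / (1 - q) := by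
    rw [qbinom, Nat.add_sub_cancel_left]
    have h1 : qp q q 1 = 1 - q := by simp [qp]
    rw [h1, qp_succ q q m]
    have hm := (qp_q_pos hp0 hp1 hq0 hq1 m).ne'
    have hq' : (1 : ℝ) - q ≠ 0 := by linarith
    rw [← pow_succ']
    field_simp
  have hb1 := (one_sub_pq_pos hp0 hp1 hq0 hq1 m).ne'
  have hA := (P_pos hp0 hp1 hq0 hq1 (m + 2)).ne'
  have hq' : (1 : ℝ) - q ≠ 0 := by linarith
  have hT : 1 - (1 - q ^ m) / (1 - p * q ^ m) *
      (qpInf (q ^ (m + 1 + 1)) q / qpInf (p * q ^ (m + 1 + 1)) q)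
      = ((1 - p * q ^ m) * qpInf (p * q ^ (m + 2)) q -
          (1 - q ^ m) * qpInf ((q : ℝ) ^ (m + 2)) q) /
        ((1 - p * q ^ m) * qpInf (p * q ^ (m + 2)) q) := by
    simp only [show m + 1 + 1 = m + 2 from rfl]
    field_simp
    have hb1' : 1 - q ^ m * p ≠ 0 := by rwa [mul_comm] at hb1
    rw [sub_div, mul_div_cancel_left₀ _ hb1']
  rw [bt, hqb, hT, qp_succ p q m]
  have hF := (qp_p_pos hp0 hp1 hq0 hq1 m).ne'
  field_simp

lemma ratio_S (m : ℕ) :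
    bt p q m (m + 1) / bt p q (m + 1) (m + 1)
      = -((1 - q ^ (m + 1)) * qpInf (p * q ^ m) q -
          (1 - p * q ^ (m + 1)) * qpInf ((q : ℝ) ^ m) q) *
        q ^ (-2 * ((m : ℝ) + 1) + 1 / 2) / ((1 - q) * Δ p q (m + 1)) := by
  have hA := (P_pos hp0 hp1 hq0 hq1 (m + 2)).ne'
  have hD := (Δ_pos hp0 hp1 hq0 hq1 (m + 1)).ne'
  have hF := (qp_p_pos hp0 hp1 hq0 hq1 (m + 1)).ne'
  have hu : (1 : ℝ) - q ≠ 0 := by linarith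
  have hb1 := (one_sub_pq_pos hp0 hp1 hq0 hq1 m).ne'
  have hb2 := (one_sub_pq_pos hp0 hp1 hq0 hq1 (m + 1)).ne'
  have hY : q ^ (((m : ℝ) + 1) ^ 2 + ((m : ℝ) + 1) / 2) ≠ 0 := (Real.rpow_pos_of_pos hq0 _).ne'
  have hE : q ^ (-2 * ((m : ℝ) + 1) + 1 / 2) ≠ 0 := (Real.rpow_pos_of_pos hq0 _).ne'
  have hX : q ^ ((m : ℝ) ^ 2 + (m : ℝ) / 2)
      = q ^ (((m : ℝ) + 1) ^ 2 + ((m : ℝ) + 1) / 2) * q ^ (-2 * ((m : ℝ) + 1) + 1 / 2) := by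
    rw [← Real.rpow_add hq0]; congr 1; ring
  have hCt := Ct_ne hp0 hp1 hq0 hq1 (m + 1)
  rw [bt_offdiag hp0 hp1 hq0 hq1 m, bt_diag hp0 hp1 hq0 hq1 (m + 1),
      P_shift hp0 hp1 hq0 hq1 m, G_shift hp0 hp1 hq0 hq1 m,
      P_shift hp0 hp1 hq0 hq1 (m + 1), G_shift hp0 hp1 hq0 hq1 (m + 1)]
  simp only [show m + 1 + 1 = m + 2 from rfl]
  push_cast
  rw [hX, qp_succ p q (m + 1), pow_succ ((-1) : ℝ) m]
  set s := ((-1 : ℝ)) ^ m with hs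
  have hsne : s ≠ 0 := pow_ne_zero _ (by norm_num)
  field_simp

lemma bt_diag_sq (m : ℕ) :
    (bt p q m m) ^ 2 = q ^ (2 * (m : ℝ) ^ 2 + 2 * (m : ℝ) + 1 / 2) * Δ p q m /
      (qp p q (m + 1) * qp q q m * Δ p q (m + 1)) := by
  have hqpp := qp_p_pos hp0 hp1 hq0 hq1 (m + 1)
  have hqpq := qp_q_pos hp0 hp1 hq0 hq1 m
  have hP := P_pos hp0 hp1 hq0 hq1 (m + 1)
  have hD0 := Δ_pos hp0 hp1 hq0 hq1 m
  have hD1 := Δ_pos hp0 hp1 hq0 hq1 (m + 1)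
  have hsq : ∀ a : ℝ, (q ^ a) ^ 2 = q ^ (2 * a) := fun a => by
    rw [sq, ← Real.rpow_add hq0]; congr 1; ring
  have hcomb : q ^ (2 * (m : ℝ) ^ 2 + 2 * (m : ℝ) + 1 / 2)
      = q ^ (2 * ((m : ℝ) / 2 + 1 / 4)) * q ^ (2 * ((m : ℝ) ^ 2 + (m : ℝ) / 2)) := by
    rw [← Real.rpow_add hq0]; congr 1; ring
  rw [bt_diag hp0 hp1 hq0 hq1 m, Ct, hcomb]
  rw [mul_pow, mul_pow, div_pow, mul_pow, mul_pow, mul_pow, div_pow, mul_pow]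
  rw [Real.sq_sqrt (le_of_lt (div_pos hqpp hqpq)),
    Real.sq_sqrt (le_of_lt (mul_pos hD0 hD1)), hsq, hsq]
  have h1 : ((-1 : ℝ) ^ m) ^ 2 = 1 := by
    rw [← pow_mul, mul_comm, pow_mul]; norm_num
  rw [h1]
  field_simp

lemma ratio_L (m : ℕ) :
    (bt p q m m / bt p q (m + 1) (m + 1)) ^ 2
      = Δ p q m * Δ p q (m + 2) / (Δ p q (m + 1)) ^ 2 *
          ((1 - q ^ (m + 1)) * (1 - p * q ^ (m + 1))) * q ^ (-(4 : ℝ) * ((m : ℝ) + 1)) := by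
  have hqpp := (qp_p_pos hp0 hp1 hq0 hq1 (m + 1)).ne'
  have hqpq := (qp_q_pos hp0 hp1 hq0 hq1 m).ne'
  have hqpp2 := (qp_p_pos hp0 hp1 hq0 hq1 (m + 2)).ne'
  have hqpq2 := (qp_q_pos hp0 hp1 hq0 hq1 (m + 1)).ne'
  have hD0 := (Δ_pos hp0 hp1 hq0 hq1 m).ne'
  have hD1 := (Δ_pos hp0 hp1 hq0 hq1 (m + 1)).ne'
  have hD2 := (Δ_pos hp0 hp1 hq0 hq1 (m + 2)).ne'
  have hb2 := (one_sub_pq_pos hp0 hp1 hq0 hq1 (m + 1)).ne'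
  have hYne : q ^ (2 * ((m : ℝ) + 1) ^ 2 + 2 * ((m : ℝ) + 1) + 1 / 2) ≠ 0 :=
    (Real.rpow_pos_of_pos hq0 _).ne'
  have hEne : q ^ (-(4 : ℝ) * ((m : ℝ) + 1)) ≠ 0 := (Real.rpow_pos_of_pos hq0 _).ne'
  have hXX : q ^ (2 * (m : ℝ) ^ 2 + 2 * (m : ℝ) + 1 / 2)
      = q ^ (2 * ((m : ℝ) + 1) ^ 2 + 2 * ((m : ℝ) + 1) + 1 / 2) *
        q ^ (-(4 : ℝ) * ((m : ℝ) + 1)) := by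
    rw [← Real.rpow_add hq0]; congr 1; ring
  rw [div_pow, bt_diag_sq hp0 hp1 hq0 hq1 m, bt_diag_sq hp0 hp1 hq0 hq1 (m + 1)]
  push_cast
  simp only [show m + 1 + 1 = m + 2 from rfl]
  rw [qp_succ p q (m + 1), qp_succ q q m, ← pow_succ', hXX]
  field_simp
end main2

theorem stmt_12 (p q : ℝ) (hp0 : 0 ≤ p) (hp1 : p < 1) (hq0 : 0 < q) (hq1 : q < 1) :
    (-(bt p q 0 1) / bt p q 1 1 = qpInf p q * q ^ (-(3 : ℝ) / 2) / Δ p q 1) ∧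
    (∀ n : ℕ, 1 ≤ n →
      bt p q (n - 1) n / bt p q n n - bt p q n (n + 1) / bt p q (n + 1) (n + 1)
        = ((1 - q ^ (n + 1)) * qpInf (p * q ^ n) q -
              (1 - p * q ^ (n + 1)) * qpInf (q ^ n) q) *
            (q ^ (-2 * (n : ℝ) - 3 / 2) / ((1 - q) * Δ p q (n + 1))) -
          ((1 - q ^ n) * qpInf (p * q ^ (n - 1)) q -
              (1 - p * q ^ n) * qpInf (q ^ (n - 1)) q) *
            (q ^ (-2 * (n : ℝ) + 1 / 2) / ((1 - q) * Δ p q n))) ∧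
    (∀ n : ℕ, 1 ≤ n →
      (bt p q (n - 1) (n - 1) / bt p q n n) ^ 2
        = Δ p q (n - 1) * Δ p q (n + 1) / (Δ p q n) ^ 2 *
            ((1 - q ^ n) * (1 - p * q ^ n)) * q ^ (-(4 : ℝ) * (n : ℝ))) := by
  refine ⟨?_, ?_, ?_⟩
  · have h := ratio_S hp0 hp1 hq0 hq1 0
    have hu : (1 : ℝ) - q ≠ 0 := by linarith
    have hD := (Δ_pos hp0 hp1 hq0 hq1 1).ne'
    rw [neg_div, h, G_zero hp0 hp1 hq0 hq1]
    have hexp : q ^ (-2 * ((0 : ℕ) + 1 : ℝ) + 1 / 2) = q ^ (-(3 : ℝ) / 2) := by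
      norm_num
    simp only [pow_zero, mul_one, pow_one, mul_zero, sub_zero] at *
    rw [hexp]
    field_simp
    ring
  · intro n hn
    obtain ⟨m, rfl⟩ : ∃ m, n = m + 1 := ⟨n - 1, by omega⟩
    simp only [Nat.add_sub_cancel]
    rw [ratio_S hp0 hp1 hq0 hq1 m, ratio_S hp0 hp1 hq0 hq1 (m + 1)]
    push_cast
    have hexp : q ^ (-2 * ((m : ℝ) + 1 + 1) + 1 / 2) = q ^ (-2 * ((m : ℝ) + 1) - 3 / 2) := by
      congr 1; ring
    rw [hexp]
    ring
  · intro n hn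
    obtain ⟨m, rfl⟩ : ∃ m, n = m + 1 := ⟨n - 1, by omega⟩
    simp only [Nat.add_sub_cancel]
    rw [ratio_L hp0 hp1 hq0 hq1 m]
    push_cast
    simp only [show m + 1 + 1 = m + 2 from rfl]
    try ring
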